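/- Let k be a field of characteristic 2, m ≥ 3 odd, and V a k-vector space of dimension 2m. The divided-square quadratic form on Λ^m V is well-defined independently of the choice of basis: if e_1,…,e_{2m} and f_1,…,f_{2m} are two bases of V inducing the same identification Λ^{2m} V ≅ k, then the formulas Q_e and Q_f defined by Q(Σ x_I e_I) = Σ_{I,J disjoint, min I < min J} x_I x_J agree as quadratic forms on Λ^m V. -/

import Mathlib

/-- Coordinates of `Λ^m V` with respect to a basis of `V` indexed by `Fin N`. -/
abbrev ExtIdx (N m : ℕ) := {s : Finset (Fin N) // s.card = m}

/-- The divided-square quadratic form on `Λ^m V` in characteristic `2`. -/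
def divSq {k : Type*} [Field k] {N m : ℕ} (x : ExtIdx N m → k) : k :=
  ∑ p ∈ Finset.univ.filter
      (fun p : ExtIdx N m × ExtIdx N m =>
        Disjoint p.1.1 p.2.1 ∧ p.1.1.min < p.2.1.min),
    x p.1 * x p.2

/-- The `m`-th compound (exterior power) action of a matrix `g` on the coordinates of
`Λ^m V`: `(g·x)_I = ∑_J det(g_{I,J}) x_J`, where `g_{I,J}` is the submatrix of `g` with
rows `I` and columns `J` (listed in increasing order). -/
def compoundAct {k : Type*} [Field k] {N m : ℕ} (g : Matrix (Fin N) (Fin N) k)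
    (x : ExtIdx N m → k) : ExtIdx N m → k :=
  fun I => ∑ J : ExtIdx N m,
    (g.submatrix (fun a : Fin m => ((I.1.orderIsoOfFin I.2 a : I.1) : Fin N))
        (fun a : Fin m => ((J.1.orderIsoOfFin J.2 a : J.1) : Fin N))).det * x J

namespace Stmt4

open Finset Equiv

variable {k : Type*} [Field k] [CharP k 2]

/-- In characteristic two, `ℤˣ`-scalars act trivially. -/
lemma units_smul_char2 (u : ℤˣ) (a : k) : u • a = a := by
  rcases Int.units_eq_one_or u with h | h <;> subst h
  · simp
  · simp [Units.smul_def, CharTwo.neg_eq]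

/-- In characteristic two the determinant is the "permanent" sum over permutations. -/
lemma det_char2 {n : Type*} [DecidableEq n] [Fintype n] (M : Matrix n n k) :
    M.det = ∑ σ : Equiv.Perm n, ∏ i, M (σ i) i := by
  rw [Matrix.det_apply]
  exact Finset.sum_congr rfl fun σ _ => units_smul_char2 _ _

section emb

variable {N n : ℕ}

/-- The increasing enumeration of an `m`-element subset. -/
def emb (J : ExtIdx N n) : Fin n → Fin N :=
  fun a => ((J.1.orderIsoOfFin J.2 a : J.1) : Fin N)

lemma emb_mem (J : ExtIdx N n) (a : Fin n) : emb J a ∈ J.1 :=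
  (J.1.orderIsoOfFin J.2 a).2

lemma emb_inj (J : ExtIdx N n) : Function.Injective (emb J) := fun a b h =>
  (J.1.orderIsoOfFin J.2).injective (Subtype.coe_injective h)

lemma image_emb (J : ExtIdx N n) : Finset.image (emb J) Finset.univ = J.1 := by
  apply Finset.eq_of_subset_of_card_le
  · intro b hb
    obtain ⟨a, _, rfl⟩ := Finset.mem_image.1 hb
    exact emb_mem J a
  · rw [Finset.card_image_of_injective _ (emb_inj J), Finset.card_univ, Fintype.card_fin, J.2]

lemma mem_iff_emb (J : ExtIdx N n) (b : Fin N) : b ∈ J.1 ↔ ∃ a, emb J a = b := by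
  rw [← image_emb J]
  simp

end emb

section main

variable {m : ℕ}

/-- The complementary multi-index. -/
def compl (J : ExtIdx (2 * m) m) : ExtIdx (2 * m) m :=
  ⟨J.1ᶜ, by rw [Finset.card_compl, J.2, Fintype.card_fin]; omega⟩

lemma mem_compl {J : ExtIdx (2 * m) m} {a : Fin (2 * m)} : a ∈ (compl J).1 ↔ a ∉ J.1 :=
  Finset.mem_compl

lemma compl_compl' (J : ExtIdx (2 * m) m) : compl (compl J) = J :=
  Subtype.ext (compl_compl _)

lemma compl_ne [NeZero (2 * m)] (J : ExtIdx (2 * m) m) : J ≠ compl J := by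
  intro h
  have h0 := (mem_compl (J := J) (a := 0))
  rw [← h] at h0
  tauto

/-- The bijection `Fin m ⊕ Fin m ≃ Fin (2m)` determined by a multi-index `K` (first
component enumerates `K`, second enumerates its complement). -/
noncomputable def EK (K : ExtIdx (2 * m) m) : (Fin m ⊕ Fin m) ≃ Fin (2 * m) :=
  Equiv.ofBijective (Sum.elim (emb K) (emb (compl K))) (by
    rw [Fintype.bijective_iff_injective_and_card]
    constructor
    · intro s t h
      rcases s with a | a <;> rcases t with b | b <;> simp only [Sum.elim_inl, Sum.elim_inr] at h
      · exact congrArg Sum.inl (emb_inj K h)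
      · exact absurd (h ▸ emb_mem K a) (mem_compl.1 (emb_mem (compl K) b))
      · exact absurd (h ▸ emb_mem (compl K) a) (fun hc => mem_compl.1 hc (emb_mem K b))
      · exact congrArg Sum.inr (emb_inj (compl K) h)
    · simp only [Fintype.card_sum, Fintype.card_fin]
      omega)

lemma EK_inl (K : ExtIdx (2 * m) m) (a : Fin m) : EK K (Sum.inl a) = emb K a := rfl

lemma EK_inr (K : ExtIdx (2 * m) m) (a : Fin m) : EK K (Sum.inr a) = emb (compl K) a := rfl

/-- The multi-index cut out by the left half of a bijection `Fin m ⊕ Fin m ≃ Fin (2m)`. -/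
def imgK (e : (Fin m ⊕ Fin m) ≃ Fin (2 * m)) : ExtIdx (2 * m) m :=
  ⟨Finset.image (fun a => e (Sum.inl a)) Finset.univ, by
    rw [Finset.card_image_of_injective _ (fun a b h => Sum.inl.inj (e.injective h)),
      Finset.card_univ, Fintype.card_fin]⟩

variable (g : Matrix (Fin (2 * m)) (Fin (2 * m)) k)

/-- The minor of `g` with rows `K` and columns `J`. -/
def dd (K J : ExtIdx (2 * m) m) : k := (g.submatrix (emb K) (emb J)).det

lemma dd_eq (K J : ExtIdx (2 * m) m) :
    dd g K J = ∑ ρ : Equiv.Perm (Fin m), ∏ a, g (emb K (ρ a)) (emb J a) := by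
  rw [dd, det_char2]
  rfl

/-- The contribution of a bijection `e` to a product of complementary minors. -/
def trm (F : Fin m ⊕ Fin m → Fin (2 * m)) (e : (Fin m ⊕ Fin m) ≃ Fin (2 * m)) : k :=
  ∏ t, g (e t) (F t)

lemma trm_swap (F : Fin m ⊕ Fin m → Fin (2 * m)) {t₁ t₂ : Fin m ⊕ Fin m}
    (hF : F t₁ = F t₂) (e : (Fin m ⊕ Fin m) ≃ Fin (2 * m)) :
    trm g F ((Equiv.swap t₁ t₂).trans e) = trm g F e := by
  have hFs : ∀ t, F (Equiv.swap t₁ t₂ t) = F t := by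
    intro t
    rcases eq_or_ne t t₁ with rfl | h1
    · rw [Equiv.swap_apply_left, hF]
    rcases eq_or_ne t t₂ with rfl | h2
    · rw [Equiv.swap_apply_right, hF]
    · rw [Equiv.swap_apply_of_ne_of_ne h1 h2]
  unfold trm
  calc ∏ t, g (e (Equiv.swap t₁ t₂ t)) (F t)
      = ∏ t, g (e (Equiv.swap t₁ t₂ t)) (F (Equiv.swap t₁ t₂ t)) :=
        Finset.prod_congr rfl fun t _ => by rw [hFs]
    _ = ∏ t, g (e t) (F t) := Equiv.prod_comp (Equiv.swap t₁ t₂) (fun t => g (e t) (F t))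

/-- Fibering a sum of products of complementary minors over bijections. -/
lemma fiber (P : ExtIdx (2 * m) m → Prop) [DecidablePred P] (J J' : ExtIdx (2 * m) m) :
    ∑ K ∈ Finset.univ.filter P, dd g K J * dd g (compl K) J'
      = ∑ e ∈ Finset.univ.filter
          (fun e : (Fin m ⊕ Fin m) ≃ Fin (2 * m) => P (imgK e)),
          trm g (Sum.elim (emb J) (emb J')) e := by
  have hfil : (Finset.univ.filter
      (fun e : (Fin m ⊕ Fin m) ≃ Fin (2 * m) => P (imgK e)))
      = Finset.univ.filter (fun e => imgK e ∈ Finset.univ.filter P) := by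
    simp
  rw [hfil, ← Finset.sum_fiberwise_eq_sum_filter Finset.univ (Finset.univ.filter P) imgK
      (trm g (Sum.elim (emb J) (emb J')))]
  refine Finset.sum_congr rfl fun K hK => ?_
  rw [dd_eq, dd_eq, Finset.sum_mul_sum, ← Finset.sum_product']
  refine Finset.sum_bij
    (i := fun (p : Equiv.Perm (Fin m) × Equiv.Perm (Fin m)) _ =>
      (Equiv.sumCongr p.1 p.2).trans (EK K)) ?_ ?_ ?_ ?_
  · -- membership : imgK of the constructed bijection is `K`
    intro p _
    simp only [Finset.mem_filter, Finset.mem_univ, true_and]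
    apply Subtype.ext
    show Finset.image (fun a => EK K (Sum.inl (p.1 a))) Finset.univ = K.1
    have : (fun a => EK K (Sum.inl (p.1 a))) = emb K ∘ p.1 := rfl
    rw [this, ← Finset.image_image, Finset.image_univ_equiv, image_emb]
  · -- injectivity
    intro p₁ _ p₂ _ h
    have h1 : ∀ a, emb K (p₁.1 a) = emb K (p₂.1 a) := fun a =>
      congrArg (fun (e : (Fin m ⊕ Fin m) ≃ Fin (2 * m)) => e (Sum.inl a)) h
    have h2 : ∀ a, emb (compl K) (p₁.2 a) = emb (compl K) (p₂.2 a) := fun a =>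
      congrArg (fun (e : (Fin m ⊕ Fin m) ≃ Fin (2 * m)) => e (Sum.inr a)) h
    ext a
    · exact congrArg Fin.val (emb_inj K (h1 a))
    · exact congrArg Fin.val (emb_inj (compl K) (h2 a))
  · -- surjectivity
    intro e he
    simp only [Finset.mem_filter, Finset.mem_univ, true_and] at he
    have hmem1 : ∀ a, e (Sum.inl a) ∈ K.1 := by
      intro a
      rw [← he]
      exact Finset.mem_image_of_mem _ (Finset.mem_univ a)
    have hmem2 : ∀ a, e (Sum.inr a) ∈ (compl K).1 := by
      intro a
      rw [mem_compl, ← he]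
      intro hc
      obtain ⟨b, _, hb⟩ := Finset.mem_image.1 hc
      exact Sum.inl_ne_inr (e.injective hb)
    have hinj1 : Function.Injective
        (fun a => (K.1.orderIsoOfFin K.2).symm ⟨e (Sum.inl a), hmem1 a⟩) := by
      intro a b h
      have := (K.1.orderIsoOfFin K.2).symm.injective h
      exact Sum.inl.inj (e.injective (congrArg Subtype.val this))
    have hinj2 : Function.Injective
        (fun a => ((compl K).1.orderIsoOfFin (compl K).2).symm ⟨e (Sum.inr a), hmem2 a⟩) := by
      intro a b h
      have := ((compl K).1.orderIsoOfFin (compl K).2).symm.injective h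
      exact Sum.inr.inj (e.injective (congrArg Subtype.val this))
    refine ⟨(Equiv.ofBijective _ (Finite.injective_iff_bijective.1 hinj1),
             Equiv.ofBijective _ (Finite.injective_iff_bijective.1 hinj2)),
            Finset.mem_univ _, ?_⟩
    apply Equiv.ext
    rintro (a | a)
    · show EK K (Sum.inl ((K.1.orderIsoOfFin K.2).symm ⟨e (Sum.inl a), hmem1 a⟩)) = _
      rw [EK_inl]
      show ((K.1.orderIsoOfFin K.2) ((K.1.orderIsoOfFin K.2).symm _) : Fin (2 * m)) = _
      rw [OrderIso.apply_symm_apply]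
    · show EK K (Sum.inr (((compl K).1.orderIsoOfFin (compl K).2).symm
        ⟨e (Sum.inr a), hmem2 a⟩)) = _
      rw [EK_inr]
      show (((compl K).1.orderIsoOfFin (compl K).2)
        (((compl K).1.orderIsoOfFin (compl K).2).symm _) : Fin (2 * m)) = _
      rw [OrderIso.apply_symm_apply]
  · -- values
    intro p _
    rw [trm, Fintype.prod_sum_type]
    rfl

/-- Generalized Laplace expansion in characteristic two. -/
lemma sum_trm_all (hdet : g.det = 1) (J J' : ExtIdx (2 * m) m) :
    ∑ e : (Fin m ⊕ Fin m) ≃ Fin (2 * m), trm g (Sum.elim (emb J) (emb J')) e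
      = if J' = compl J then (1 : k) else 0 := by
  split_ifs with h
  · -- `J' = Jᶜ` : the sum is `det g = 1` (char 2 Laplace expansion)
    subst h
    have key : ∀ τ : Equiv.Perm (Fin (2 * m)),
        trm g (Sum.elim (emb J) (emb (compl J))) ((EK J).trans τ)
          = ∏ s, g (τ s) s := by
      intro τ
      rw [trm]
      have : ∀ t : Fin m ⊕ Fin m, Sum.elim (emb J) (emb (compl J)) t = EK J t := by
        rintro (a | a) <;> rfl
      calc ∏ t, g (((EK J).trans τ) t) (Sum.elim (emb J) (emb (compl J)) t)
          = ∏ t, g (τ (EK J t)) (EK J t) := Finset.prod_congr rfl fun t _ => by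
            rw [this]; rfl
        _ = ∏ s, g (τ s) s := Equiv.prod_comp (EK J) (fun s => g (τ s) s)
    have hbij := Equiv.sum_comp (Equiv.equivCongr (EK J).symm (Equiv.refl (Fin (2 * m))))
      (trm g (Sum.elim (emb J) (emb (compl J))))
    have happ : ∀ τ : Equiv.Perm (Fin (2 * m)),
        (Equiv.equivCongr (EK J).symm (Equiv.refl (Fin (2 * m)))) τ = (EK J).trans τ := by
      intro τ; rfl
    rw [← hbij]
    simp only [happ, key]
    rw [← det_char2, hdet]
  · -- `J' ≠ Jᶜ` : `J` and `J'` meet, and the sum cancels in pairs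
    have hnd : ¬Disjoint J.1 J'.1 := by
      intro hd
      apply h
      apply Subtype.ext
      show J'.1 = J.1ᶜ
      refine Finset.eq_of_subset_of_card_le (fun a ha => Finset.mem_compl.2 ?_) ?_
      · exact fun hc => (Finset.disjoint_left.1 hd) hc ha
      · show J.1ᶜ.card ≤ J'.1.card
        rw [J'.2, Finset.card_compl, J.2, Fintype.card_fin]
        omega
    obtain ⟨c, hc⟩ := Finset.not_disjoint_iff_nonempty_inter.1 hnd
    obtain ⟨a, ha⟩ := (mem_iff_emb J c).1 (Finset.mem_of_mem_inter_left hc)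
    obtain ⟨b, hb⟩ := (mem_iff_emb J' c).1 (Finset.mem_of_mem_inter_right hc)
    have hF : Sum.elim (emb J) (emb J') (Sum.inl a)
        = Sum.elim (emb J) (emb J') (Sum.inr b) := by
      simp [ha, hb]
    refine Finset.sum_ninvolution
      (fun e => (Equiv.swap (Sum.inl a) (Sum.inr b)).trans e) ?_ ?_ ?_ ?_
    · intro e
      rw [trm_swap g _ hF, CharTwo.add_self_eq_zero]
    · intro e _
      intro hcon
      have := congrArg (fun (e : (Fin m ⊕ Fin m) ≃ Fin (2 * m)) => e (Sum.inl a)) hcon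
      simp only [Equiv.trans_apply, Equiv.swap_apply_left] at this
      exact Sum.inr_ne_inl (e.injective this)
    · exact fun e => Finset.mem_univ _
    · intro e
      apply Equiv.ext
      intro t
      simp [Equiv.swap_apply_self]

/-- The diagonal sum vanishes (for `m ≥ 2`). -/
lemma sum_trm_diag [NeZero (2 * m)] (hm2 : 2 ≤ m) (J : ExtIdx (2 * m) m) :
    ∑ e ∈ Finset.univ.filter
        (fun e : (Fin m ⊕ Fin m) ≃ Fin (2 * m) => (0 : Fin (2 * m)) ∈ (imgK e).1),
        trm g (Sum.elim (emb J) (emb J)) e = 0 := by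
  have hm0 : 0 < m := by omega
  have hm1 : 1 < m := by omega
  set z0 : Fin m := ⟨0, hm0⟩ with hz0
  set z1 : Fin m := ⟨1, hm1⟩ with hz1
  set a0 : ((Fin m ⊕ Fin m) ≃ Fin (2 * m)) → Fin m :=
    fun e => Sum.elim id id (e.symm 0) with ha0
  set asw : ((Fin m ⊕ Fin m) ≃ Fin (2 * m)) → Fin m :=
    fun e => if a0 e = z0 then z1 else z0 with hasw
  have hne : ∀ e, asw e ≠ a0 e := by
    intro e
    rw [hasw]
    dsimp only
    split_ifs with h
    · rw [h]; intro hc; exact absurd (congrArg Fin.val hc) (by simp [hz0, hz1])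
    · exact fun hc => h hc.symm
  set inv : ((Fin m ⊕ Fin m) ≃ Fin (2 * m)) → ((Fin m ⊕ Fin m) ≃ Fin (2 * m)) :=
    fun e => (Equiv.swap (Sum.inl (asw e)) (Sum.inr (asw e))).trans e with hinv
  have hsymm : ∀ e : (Fin m ⊕ Fin m) ≃ Fin (2 * m),
      (0 : Fin (2 * m)) ∈ (imgK e).1 → e.symm 0 = Sum.inl (a0 e) := by
    intro e he
    obtain ⟨a, _, ha⟩ := Finset.mem_image.1 he
    have h1 : e.symm 0 = Sum.inl a := by rw [← ha, Equiv.symm_apply_apply]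
    have h2 : a0 e = a := by rw [ha0]; dsimp only; rw [h1]; rfl
    rw [h1, h2]
  have hinvsymm : ∀ e, (0 : Fin (2 * m)) ∈ (imgK e).1 →
      (inv e).symm 0 = Sum.inl (a0 e) := by
    intro e he
    rw [hinv]
    simp only [Equiv.symm_trans_apply, hsymm e he, Equiv.symm_swap]
    exact Equiv.swap_apply_of_ne_of_ne
      (fun hc => hne e (Sum.inl.inj hc).symm) (fun hc => Sum.inl_ne_inr hc)
  have hinv_mem : ∀ e, (0 : Fin (2 * m)) ∈ (imgK e).1 →
      (0 : Fin (2 * m)) ∈ (imgK (inv e)).1 := by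
    intro e he
    apply Finset.mem_image.2 ⟨a0 e, Finset.mem_univ _, ?_⟩
    have : (inv e) ((inv e).symm 0) = 0 := Equiv.apply_symm_apply _ _
    rwa [hinvsymm e he] at this
  have ha0_inv : ∀ e, (0 : Fin (2 * m)) ∈ (imgK e).1 → a0 (inv e) = a0 e := by
    intro e he
    have h1 : (inv e).symm 0 = Sum.inl (a0 e) := hinvsymm e he
    rw [ha0]
    dsimp only
    rw [h1]
    rfl
  refine Finset.sum_involution (fun e _ => inv e) ?_ ?_ ?_ ?_
  · intro e _
    have hF : Sum.elim (emb J) (emb J) (Sum.inl (asw e))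
        = Sum.elim (emb J) (emb J) (Sum.inr (asw e)) := rfl
    rw [hinv]
    dsimp only
    rw [trm_swap g _ hF, CharTwo.add_self_eq_zero]
  · intro e ha hne0 hc
    have h2 : inv e (Sum.inl (asw e)) = e (Sum.inl (asw e)) :=
      congrArg (fun f : (Fin m ⊕ Fin m) ≃ Fin (2 * m) => f (Sum.inl (asw e))) hc
    have h3 : e (Sum.inr (asw e)) = e (Sum.inl (asw e)) := by
      simpa [hinv, Equiv.trans_apply, Equiv.swap_apply_left] using h2
    exact Sum.inr_ne_inl (e.injective h3)
  · intro e he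
    simp only [Finset.mem_filter, Finset.mem_univ, true_and] at he ⊢
    exact hinv_mem e he
  · intro e he
    simp only [Finset.mem_filter, Finset.mem_univ, true_and] at he
    have hasw_inv : asw (inv e) = asw e := by rw [hasw]; dsimp only; rw [ha0_inv e he]
    apply Equiv.ext
    intro t
    show ((Equiv.swap (Sum.inl (asw (inv e))) (Sum.inr (asw (inv e)))).trans (inv e)) t = e t
    rw [hasw_inv, hinv]
    simp [Equiv.swap_apply_self]

/-- The coefficient of `x_J x_{J'}` in `Q(gx)`. -/
def CC [NeZero (2 * m)] (J J' : ExtIdx (2 * m) m) : k :=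
  ∑ K ∈ Finset.univ.filter (fun K : ExtIdx (2 * m) m => (0 : Fin (2 * m)) ∈ K.1),
    dd g K J * dd g (compl K) J'

lemma CC_add [NeZero (2 * m)] (hdet : g.det = 1) (J J' : ExtIdx (2 * m) m) :
    CC g J J' + CC g J' J = if J' = compl J then (1 : k) else 0 := by
  have h2 : CC g J' J = ∑ K ∈ Finset.univ.filter
      (fun K : ExtIdx (2 * m) m => ¬ (0 : Fin (2 * m)) ∈ K.1),
      dd g K J * dd g (compl K) J' := by
    rw [CC]
    refine Finset.sum_bij (i := fun K _ => compl K) ?_ ?_ ?_ ?_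
    · intro K hK
      simp only [Finset.mem_filter, Finset.mem_univ, true_and] at hK ⊢
      exact fun hc => mem_compl.1 hc hK
    · intro K₁ _ K₂ _ h
      have h' : compl K₁ = compl K₂ := h
      rw [← compl_compl' K₁, h', compl_compl']
    · intro K hK
      simp only [Finset.mem_filter, Finset.mem_univ, true_and] at hK
      refine ⟨compl K, ?_, compl_compl' K⟩
      simp only [Finset.mem_filter, Finset.mem_univ, true_and]
      exact mem_compl.2 hK
    · intro K _
      show dd g K J' * dd g (compl K) J = dd g (compl K) J * dd g (compl (compl K)) J'
      rw [compl_compl' K]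
      ring
  rw [CC, h2, Finset.sum_filter_add_sum_filter_not]
  have hf := fiber g (fun _ : ExtIdx (2 * m) m => True) J J'
  rw [Finset.filter_true, Finset.filter_true] at hf
  rw [hf]
  exact sum_trm_all g hdet J J'

lemma CC_diag [NeZero (2 * m)] (hm2 : 2 ≤ m) (J : ExtIdx (2 * m) m) :
    CC g J J = 0 := by
  rw [CC, fiber g (fun K => (0 : Fin (2 * m)) ∈ K.1) J J]
  exact sum_trm_diag g hm2 J

/-- The divided square as a sum over multi-indices containing `0`. -/
lemma divSq_eq [NeZero (2 * m)] (hm0 : 0 < m) (y : ExtIdx (2 * m) m → k) :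
    divSq y = ∑ J ∈ Finset.univ.filter
        (fun J : ExtIdx (2 * m) m => (0 : Fin (2 * m)) ∈ J.1), y J * y (compl J) := by
  rw [divSq]
  symm
  refine Finset.sum_bij (i := fun (J : ExtIdx (2 * m) m) _ => (J, compl J)) ?_ ?_ ?_ ?_
  · intro J hJ
    simp only [Finset.mem_filter, Finset.mem_univ, true_and] at hJ ⊢
    refine ⟨disjoint_compl_right, ?_⟩
    have h1 : J.1.min ≤ ((0 : Fin (2 * m)) : WithTop (Fin (2 * m))) := Finset.min_le hJ
    have hne : (compl J).1.Nonempty := by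
      rw [← Finset.card_pos, (compl J).2]; exact hm0
    obtain ⟨b, hb⟩ := Finset.min_of_nonempty hne
    have hbmem : b ∈ (compl J).1 := Finset.mem_of_min hb
    have hb0 : b ≠ 0 := fun hc => (mem_compl.1 hbmem) (hc ▸ hJ)
    have hlt : ((0 : Fin (2 * m)) : WithTop (Fin (2 * m))) < (b : WithTop (Fin (2 * m))) :=
      WithTop.coe_lt_coe.2 ((Fin.pos_iff_ne_zero' b).2 hb0)
    rw [hb]
    exact lt_of_le_of_lt h1 hlt
  · intro J₁ _ J₂ _ h
    exact congrArg Prod.fst h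
  · intro p hp
    simp only [Finset.mem_filter, Finset.mem_univ, true_and] at hp
    obtain ⟨hd, hmin⟩ := hp
    have hc : p.2 = compl p.1 := by
      apply Subtype.ext
      show p.2.1 = p.1.1ᶜ
      refine Finset.eq_of_subset_of_card_le
        (fun a ha => Finset.mem_compl.2 (fun hca => Finset.disjoint_left.1 hd hca ha)) ?_
      show p.1.1ᶜ.card ≤ p.2.1.card
      rw [p.2.2, Finset.card_compl, p.1.2, Fintype.card_fin]
      omega
    have h0 : (0 : Fin (2 * m)) ∈ p.1.1 := by
      by_contra h0
      have h02 : (0 : Fin (2 * m)) ∈ p.2.1 := by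
        rw [hc]; exact mem_compl.2 h0
      have hle : p.2.1.min ≤ ((0 : Fin (2 * m)) : WithTop (Fin (2 * m))) :=
        Finset.min_le h02
      have hge : ((0 : Fin (2 * m)) : WithTop (Fin (2 * m))) ≤ p.1.1.min :=
        Finset.le_min (fun b _ => WithTop.coe_le_coe.2 (Fin.zero_le b))
      exact absurd hmin (not_lt.2 (le_trans hle hge))
    refine ⟨p.1, by simp only [Finset.mem_filter, Finset.mem_univ, true_and]; exact h0, ?_⟩
    exact Prod.ext rfl hc.symm
  · intro J _
    rfl

/-- The indicator of the pair `(J, Jᶜ)` with `0 ∈ J`. -/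
def ind [NeZero (2 * m)] (J J' : ExtIdx (2 * m) m) : k :=
  if J' = compl J ∧ (0 : Fin (2 * m)) ∈ J.1 then 1 else 0

/-- The symmetrized coefficient. -/
def DD [NeZero (2 * m)] (J J' : ExtIdx (2 * m) m) : k :=
  CC g J J' + ind J J'

lemma CC_eq_DD_add_ind [NeZero (2 * m)] (J J' : ExtIdx (2 * m) m) :
    CC g J J' = DD g J J' + ind J J' := by
  rw [DD, add_assoc, CharTwo.add_self_eq_zero, add_zero]

lemma DD_symm [NeZero (2 * m)] (hdet : g.det = 1) (J J' : ExtIdx (2 * m) m) :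
    DD g J J' = DD g J' J := by
  have h : DD g J J' + DD g J' J = 0 := by
    rw [DD, DD]
    have hre : CC g J J' + ind J J' + (CC g J' J + ind J' J)
        = (CC g J J' + CC g J' J) + (ind J J' + ind (k := k) J' J) := by ring
    rw [hre, CC_add g hdet]
    by_cases h : J' = compl J
    · rw [if_pos h]
      have h' : J = compl J' := by rw [h, compl_compl']
      by_cases h0 : (0 : Fin (2 * m)) ∈ J.1
      · have i1 : ind (k := k) J J' = 1 := if_pos ⟨h, h0⟩
        have i2 : ind (k := k) J' J = 0 := by
          rw [ind, if_neg]
          rintro ⟨-, hc⟩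
          rw [h] at hc
          exact mem_compl.1 hc h0
        rw [i1, i2, add_zero, CharTwo.add_self_eq_zero]
      · have i1 : ind (k := k) J J' = 0 := by
          rw [ind, if_neg]
          rintro ⟨-, hc⟩
          exact h0 hc
        have i2 : ind (k := k) J' J = 1 := by
          rw [ind, if_pos]
          refine ⟨h'.symm ▸ rfl, ?_⟩
          · rw [h]
            exact mem_compl.2 h0
        rw [i1, i2, zero_add, CharTwo.add_self_eq_zero]
    · rw [if_neg h]
      have h' : ¬ (J = compl J') := fun hc => h (by rw [hc, compl_compl'])
      have i1 : ind (k := k) J J' = 0 := by rw [ind, if_neg]; rintro ⟨hc, -⟩; exact h hc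
      have i2 : ind (k := k) J' J = 0 := by rw [ind, if_neg]; rintro ⟨hc, -⟩; exact h' hc
      rw [i1, i2, add_zero, add_zero]
  calc DD g J J' = -(DD g J' J) := eq_neg_of_add_eq_zero_left h
    _ = DD g J' J := CharTwo.neg_eq _

lemma DD_diag [NeZero (2 * m)] (hm2 : 2 ≤ m) (J : ExtIdx (2 * m) m) :
    DD g J J = 0 := by
  rw [DD, CC_diag g hm2, ind, if_neg, add_zero]
  rintro ⟨hc, -⟩
  exact compl_ne J hc

/-- Main invariance result, assembled. -/
lemma key [NeZero (2 * m)] (hm2 : 2 ≤ m) (hdet : g.det = 1)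
    (x : ExtIdx (2 * m) m → k) :
    divSq (compoundAct g x) = divSq x := by
  have hm0 : 0 < m := by omega
  rw [divSq_eq hm0 (compoundAct g x), divSq_eq hm0 x]
  have hca : ∀ K : ExtIdx (2 * m) m, compoundAct g x K = ∑ J, dd g K J * x J :=
    fun K => rfl
  calc ∑ K ∈ Finset.univ.filter
        (fun K : ExtIdx (2 * m) m => (0 : Fin (2 * m)) ∈ K.1),
        compoundAct g x K * compoundAct g x (compl K)
      = ∑ K ∈ Finset.univ.filter
          (fun K : ExtIdx (2 * m) m => (0 : Fin (2 * m)) ∈ K.1),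
          ∑ J, ∑ J', (dd g K J * dd g (compl K) J') * (x J * x J') := by
        refine Finset.sum_congr rfl fun K _ => ?_
        rw [hca, hca, Finset.sum_mul_sum]
        exact Finset.sum_congr rfl fun J _ =>
          Finset.sum_congr rfl fun J' _ => by ring
    _ = ∑ J, ∑ J', CC g J J' * (x J * x J') := by
        rw [Finset.sum_comm]
        refine Finset.sum_congr rfl fun J _ => ?_
        rw [Finset.sum_comm]
        refine Finset.sum_congr rfl fun J' _ => ?_
        rw [CC, Finset.sum_mul]
    _ = (∑ J, ∑ J', DD g J J' * (x J * x J'))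
        + ∑ J, ∑ J', ind J J' * (x J * x J') := by
        rw [← Finset.sum_add_distrib]
        refine Finset.sum_congr rfl fun J _ => ?_
        rw [← Finset.sum_add_distrib]
        refine Finset.sum_congr rfl fun J' _ => ?_
        rw [CC_eq_DD_add_ind, add_mul]
    _ = ∑ J, ∑ J', ind J J' * (x J * x J') := by
        have hA : (∑ J, ∑ J', DD g J J' * (x J * x J')) = 0 := by
          rw [← Finset.sum_product']
          refine Finset.sum_involution (fun p _ => p.swap) ?_ ?_ ?_ ?_
          · intro p _
            have hsw : DD g p.2 p.1 * (x p.2 * x p.1)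
                = DD g p.1 p.2 * (x p.1 * x p.2) := by
              rw [DD_symm g hdet]; ring
            show DD g p.1 p.2 * (x p.1 * x p.2)
              + DD g p.2 p.1 * (x p.2 * x p.1) = 0
            rw [hsw, CharTwo.add_self_eq_zero]
          · intro p _ hne0 hc
            apply hne0
            have h21 : p.2 = p.1 := congrArg Prod.fst hc
            show DD g p.1 p.2 * (x p.1 * x p.2) = 0
            rw [h21, DD_diag g hm2, zero_mul]
          · intro p _
            exact Finset.mem_product.2 ⟨Finset.mem_univ _, Finset.mem_univ _⟩
          · intro p _
            exact Prod.swap_swap p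
        rw [hA, zero_add]
    _ = ∑ J ∈ Finset.univ.filter
          (fun J : ExtIdx (2 * m) m => (0 : Fin (2 * m)) ∈ J.1),
          x J * x (compl J) := by
        rw [Finset.sum_filter]
        refine Finset.sum_congr rfl fun J _ => ?_
        have hinner : ∀ J' : ExtIdx (2 * m) m, ind J J' * (x J * x J')
            = if J' = compl J then (if (0 : Fin (2 * m)) ∈ J.1
                then x J * x J' else 0) else 0 := by
          intro J'
          rw [ind]
          by_cases h1 : J' = compl J <;> by_cases h2 : (0 : Fin (2 * m)) ∈ J.1 <;>
            simp [h1, h2]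
        rw [Finset.sum_congr rfl fun J' _ => hinner J']
        rw [Finset.sum_ite_eq' Finset.univ (compl J)
          (fun J' => if (0 : Fin (2 * m)) ∈ J.1 then x J * x J' else 0)]
        simp

end main

end Stmt4

/-- (char 2, `m ≥ 3` odd, `dim V = 2m`.)  The divided-square quadratic
form on `Λ^m V` is well defined independently of the basis:  a change of basis of `V`
inducing the same identification `Λ^{2m} V ≅ k` is given by a matrix `g` with
`det g = 1`, under whose compound action on the coordinates of `Λ^m V` the divided
square is invariant. -/
theorem stmt4 {k : Type*} [Field k] [CharP k 2] (m : ℕ) (hm : Odd m) (hm3 : 3 ≤ m)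
    (g : Matrix (Fin (2 * m)) (Fin (2 * m)) k) (hdet : g.det = 1)
    (x : ExtIdx (2 * m) m → k) :
    divSq (compoundAct g x) = divSq x := by
  haveI : NeZero (2 * m) := ⟨by omega⟩
  exact Stmt4.key g (by omega) hdet x
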